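/- Generic rank equals term rank: fix m, n and a pattern E ⊆ {1,…,m} × {1,…,n}. For w : E → ℝ let M(w) be the m×n matrix whose (i,j)-entry is w(i,j) for (i,j) ∈ E and 0 otherwise. Let t be the maximal cardinality of a subset of E no two of whose elements share a row or share a column (the maximal number of independent free entries). Then (a) rank M(w) ≤ t for every w, and (b) the set { w ∈ ℝ^E : rank M(w) < t } has Lebesgue measure zero. -/

import Mathlib

open Matrix

/-- The structured `m × n` matrix with pattern `E` and free entries given by `w : E → ℝ`. -/
def structMat (m n : ℕ) (E : Finset (Fin m × Fin n)) (w : E → ℝ) :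
    Matrix (Fin m) (Fin n) ℝ :=
  fun a b => if h : (a, b) ∈ E then w ⟨(a, b), h⟩ else 0

open Module MeasureTheory


lemma mvpoly_null_fin : ∀ (k : ℕ) (p : MvPolynomial (Fin k) ℝ), p ≠ 0 →
    volume {x : Fin k → ℝ | MvPolynomial.eval x p = 0} = 0 := by
  intro k
  induction k with
  | zero =>
    intro p hp
    obtain ⟨c, rfl⟩ := MvPolynomial.C_surjective (Fin 0) p
    have hc : c ≠ 0 := fun h => hp (by rw [h, map_zero])
    have : {x : Fin 0 → ℝ | MvPolynomial.eval x (MvPolynomial.C c) = 0} = ∅ := by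
      ext x; simp [hc]
    rw [this]; exact measure_empty
  | succ k ih =>
    intro p hp
    set q := MvPolynomial.finSuccEquiv ℝ k p with hqdef
    have hq0 : q ≠ 0 := by
      intro h
      apply hp
      rwa [hqdef, map_eq_zero_iff _ (AlgEquiv.injective _)] at h
    obtain ⟨i, hi⟩ : ∃ i, q.coeff i ≠ 0 := by
      by_contra h
      push_neg at h
      exact hq0 (Polynomial.ext fun i => by simp [h i])
    -- continuity
    have hcont : Continuous fun z : (Fin k → ℝ) × ℝ => MvPolynomial.eval (Fin.cons z.2 z.1) p := by
      apply Continuous.comp (MvPolynomial.continuous_eval (p := p))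
      apply continuous_pi
      intro j
      refine Fin.cases ?_ (fun i => ?_) j
      · simpa using continuous_snd
      · simpa [Function.comp_def] using (continuous_apply i).comp continuous_fst
    set T : Set ((Fin k → ℝ) × ℝ) := {z | MvPolynomial.eval (Fin.cons z.2 z.1) p = 0} with hTdef
    have hTmeas : MeasurableSet T := hcont.measurable (measurableSet_singleton 0)
    have key : (volume.prod volume) T = 0 := by
      rw [Measure.measure_prod_null hTmeas]
      have hN := ih _ hi
      rw [← compl_mem_ae_iff] at hN
      filter_upwards [hN] with s hs
      show volume (Prod.mk s ⁻¹' T) = 0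
      have hmap : (q.map (MvPolynomial.eval s)) ≠ 0 := by
        intro h
        apply hs
        have : (q.map (MvPolynomial.eval s)).coeff i = 0 := by rw [h]; simp
        rw [Polynomial.coeff_map] at this
        exact this
      have hfin : (Prod.mk s ⁻¹' T).Finite := by
        apply (Polynomial.finite_setOf_isRoot hmap).subset
        intro y hy
        simp only [hTdef, Set.mem_preimage, Set.mem_setOf_eq] at hy
        rw [MvPolynomial.eval_eq_eval_mv_eval'] at hy
        exact hy
      exact hfin.measure_zero _
    -- transfer
    have hswap : (volume.prod volume) (Prod.swap ⁻¹' T : Set (ℝ × (Fin k → ℝ))) = 0 := by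
      rw [Measure.measurePreserving_swap.measure_preimage (hTmeas.nullMeasurableSet)]
      exact key
    set e := MeasurableEquiv.piFinSuccAbove (fun _ : Fin (k+1) => ℝ) 0
    have hmp := MeasureTheory.volume_preserving_piFinSuccAbove (fun _ : Fin (k+1) => ℝ) 0
    have hpre : {x : Fin (k+1) → ℝ | MvPolynomial.eval x p = 0} = e ⁻¹' (Prod.swap ⁻¹' T) := by
      ext x
      simp only [Set.mem_setOf_eq, Set.mem_preimage, hTdef, Prod.swap]
      constructor
      · intro h
        show MvPolynomial.eval (Fin.cons (x 0) (fun j => x (Fin.succAbove 0 j))) p = 0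
        have : (Fin.cons (x 0) (fun j => x (Fin.succAbove 0 j)) : Fin (k+1) → ℝ) = x := by
          ext j
          refine Fin.cases ?_ (fun i => ?_) j
          · simp
          · simp [Fin.succAbove]
        rw [this]; exact h
      · intro h
        have h' : MvPolynomial.eval (Fin.cons (x 0) (fun j => x (Fin.succAbove 0 j))) p = 0 := h
        have : (Fin.cons (x 0) (fun j => x (Fin.succAbove 0 j)) : Fin (k+1) → ℝ) = x := by
          ext j
          refine Fin.cases ?_ (fun i => ?_) j
          · simp
          · simp [Fin.succAbove]
        rwa [this] at h'
    rw [hpre]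
    rw [hmp.measure_preimage]
    · rw [Measure.volume_eq_prod]; exact hswap
    · rw [Measure.volume_eq_prod]
      exact ((hTmeas.preimage measurable_swap)).nullMeasurableSet



lemma mvpoly_null {ι : Type*} [Fintype ι] (p : MvPolynomial ι ℝ) (hp : p ≠ 0) :
    volume {x : ι → ℝ | MvPolynomial.eval x p = 0} = 0 := by
  classical
  let e : Fin (Fintype.card ι) ≃ ι := (Fintype.equivFin ι).symm
  have hmp := MeasureTheory.volume_measurePreserving_piCongrLeft (fun _ : ι => ℝ) e
  rw [← hmp.measure_preimage]
  · have hset : (⇑(MeasurableEquiv.piCongrLeft (fun _ : ι => ℝ) e)) ⁻¹'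
        {x : ι → ℝ | MvPolynomial.eval x p = 0}
        = {x : Fin (Fintype.card ι) → ℝ |
            MvPolynomial.eval x (MvPolynomial.rename e.symm p) = 0} := by
      ext x
      simp only [Set.mem_preimage, Set.mem_setOf_eq, MvPolynomial.eval_rename]
      have : (⇑(MeasurableEquiv.piCongrLeft (fun _ : ι => ℝ) e) x) = x ∘ e.symm := by
        funext i
        have h2 := MeasurableEquiv.piCongrLeft_apply_apply e (β := fun _ : ι => ℝ) x (e.symm i)
        simpa using h2
      rw [this]
    rw [hset]
    exact mvpoly_null_fin _ _ (fun h => hp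
      ((MvPolynomial.rename_injective _ e.symm.injective) (by rw [h, map_zero])))
  · exact ((MvPolynomial.continuous_eval (p := p)).measurable
      (measurableSet_singleton 0)).nullMeasurableSet


lemma exists_inj_cols {a b : ℕ} (A : Matrix (Fin a) (Fin b) ℝ) :
    ∃ g : Fin A.rank → Fin b, Function.Injective g ∧
      LinearIndependent ℝ (fun j => Aᵀ (g j)) := by
  classical
  obtain ⟨s, hsub, hspan, hli⟩ := exists_linearIndependent ℝ (Set.range Aᵀ)
  have hfin : s.Finite := (Set.finite_range Aᵀ).subset hsub
  haveI := hfin.fintype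
  have hcard : Fintype.card s = A.rank := by
    rw [rank_eq_finrank_span_cols, show Set.range A.col = Set.range Aᵀ from rfl, ← hspan, finrank_span_set_eq_card hli, Set.toFinset_card]
  let eqv : s ≃ Fin A.rank := Fintype.equivFinOfCardEq hcard
  have hidx : ∀ v : s, ∃ j : Fin b, Aᵀ j = (v : Fin a → ℝ) := fun v => hsub v.2
  choose idx hidxs using hidx
  refine ⟨fun j => idx (eqv.symm j), ?_, ?_⟩
  · intro j₁ j₂ h
    have : ((eqv.symm j₁ : s) : Fin a → ℝ) = ((eqv.symm j₂ : s) : Fin a → ℝ) := by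
      rw [← hidxs, ← hidxs]; exact congrArg Aᵀ h
    exact eqv.symm.injective (Subtype.ext this)
  · have : (fun j : Fin A.rank => Aᵀ (idx (eqv.symm j)))
        = (fun v : s => (v : Fin a → ℝ)) ∘ eqv.symm := by
      funext j; simp [hidxs]
    rw [this]
    exact hli.comp _ eqv.symm.injective

lemma exists_nonzero_minor {a b : ℕ} (A : Matrix (Fin a) (Fin b) ℝ) :
    ∃ f : Fin A.rank → Fin a, ∃ g : Fin A.rank → Fin b,
      Function.Injective f ∧ Function.Injective g ∧ (A.submatrix f g).det ≠ 0 := by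
  classical
  obtain ⟨g, hg, hli⟩ := exists_inj_cols A
  set B := A.submatrix id g with hB
  have hBrank : B.rank = A.rank := by
    rw [rank_eq_finrank_span_cols]
    have hr : Set.range Bᵀ = Set.range (fun j => Aᵀ (g j)) := rfl
    rw [show Set.range B.col = Set.range (fun j => Aᵀ (g j)) from hr, finrank_span_eq_card hli, Fintype.card_fin]
  have hBT : Bᵀ.rank = A.rank := by rw [rank_transpose, hBrank]
  obtain ⟨f', hf', hli'⟩ := exists_inj_cols Bᵀ
  let f : Fin A.rank → Fin a := fun i => f' (Fin.cast hBT.symm i)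
  have hfinj : Function.Injective f :=
    fun i₁ i₂ h => by simpa using congrArg (Fin.cast hBT) (hf' h)
  have hrows : LinearIndependent ℝ (fun i : Fin A.rank => (A.submatrix f g) i) := by
    have : (fun i : Fin A.rank => (A.submatrix f g) i)
        = (fun i' : Fin Bᵀ.rank => Bᵀᵀ (f' i')) ∘ (Fin.cast hBT.symm) := rfl
    rw [this]
    exact hli'.comp _ (fun i₁ i₂ h => by simpa using congrArg (Fin.cast hBT) h)
  have hunit : IsUnit (A.submatrix f g) := linearIndependent_rows_iff_isUnit.mp hrows
  exact ⟨f, g, hfinj, hg, ((isUnit_iff_isUnit_det _).mp hunit).ne_zero⟩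



lemma rank_submatrix_le' {a b a' b' : ℕ} (A : Matrix (Fin a) (Fin b) ℝ)
    (f : Fin a' → Fin a) (g : Fin b' → Fin b) : (A.submatrix f g).rank ≤ A.rank := by
  have h1 : (A.submatrix f id).rank ≤ A.rank := by
    rw [rank_eq_finrank_span_row, rank_eq_finrank_span_row]
    apply Submodule.finrank_mono
    apply Submodule.span_mono
    rintro _ ⟨i, rfl⟩
    exact ⟨f i, rfl⟩
  have h2 : (A.submatrix f g).rank ≤ (A.submatrix f id).rank := by
    rw [rank_eq_finrank_span_cols, rank_eq_finrank_span_cols]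
    apply Submodule.finrank_mono
    apply Submodule.span_mono
    rintro _ ⟨j, rfl⟩
    exact ⟨g j, rfl⟩
  exact h2.trans h1

/-- Generic rank equals term rank: if `t` is the maximal number of independent free entries of
the pattern `E` (no two sharing a row or a column), then `rank M(w) ≤ t` for every `w`, and
`rank M(w) < t` only on a Lebesgue-null set of parameter vectors `w`. -/
theorem stmt_7 (m n : ℕ) (E : Finset (Fin m × Fin n)) (t : ℕ)
    (ht : IsGreatest {k : ℕ | ∃ F : Finset (Fin m × Fin n), F ⊆ E ∧ F.card = k ∧
        ∀ p ∈ F, ∀ q ∈ F, p ≠ q → p.1 ≠ q.1 ∧ p.2 ≠ q.2} t) :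
    (∀ w : E → ℝ, (structMat m n E w).rank ≤ t) ∧
    MeasureTheory.volume {w : E → ℝ | (structMat m n E w).rank < t} = 0 := by
  classical
  -- Part (a)
  have parta : ∀ w : E → ℝ, (structMat m n E w).rank ≤ t := by
    intro w
    set A := structMat m n E w with hA
    obtain ⟨f, g, hf, hg, hdet⟩ := exists_nonzero_minor A
    rw [Matrix.det_apply] at hdet
    obtain ⟨σ, -, hσ⟩ := Finset.exists_ne_zero_of_sum_ne_zero hdet
    have hprod : ∀ i, A (f (σ i)) (g i) ≠ 0 := by
      intro i
      have hp : (∏ i, (A.submatrix f g) (σ i) i) ≠ 0 := by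
        intro h0; rw [h0] at hσ; simp at hσ
      rw [Finset.prod_ne_zero_iff] at hp
      exact hp i (Finset.mem_univ i)
    have hmem : ∀ i, (f (σ i), g i) ∈ E := by
      intro i
      by_contra hcon
      exact hprod i (by simp [hA, structMat, hcon])
    set F' : Finset (Fin m × Fin n) := Finset.image (fun i => (f (σ i), g i)) Finset.univ with hF'
    have hinj : Function.Injective (fun i : Fin A.rank => (f (σ i), g i)) := by
      intro i j h
      exact hg (congrArg Prod.snd h)
    apply ht.2
    refine ⟨F', ?_, ?_, ?_⟩
    · intro p hp
      obtain ⟨i, -, rfl⟩ := Finset.mem_image.mp hp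
      exact hmem i
    · rw [Finset.card_image_of_injective _ hinj, Finset.card_univ, Fintype.card_fin]
    · intro p hp q hq hpq
      obtain ⟨i, -, rfl⟩ := Finset.mem_image.mp hp
      obtain ⟨j, -, rfl⟩ := Finset.mem_image.mp hq
      have hij : i ≠ j := fun h => hpq (by rw [h])
      exact ⟨fun h => hij (σ.injective (hf h)), fun h => hij (hg h)⟩
  refine ⟨parta, ?_⟩
  -- Part (b)
  obtain ⟨F, hFE, hFcard, hFind⟩ := ht.1
  let ec : F ≃ Fin t := F.equivFinOfCardEq hFcard
  let r : Fin t → Fin m := fun i => ((ec.symm i : F) : Fin m × Fin n).1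
  let c : Fin t → Fin n := fun i => ((ec.symm i : F) : Fin m × Fin n).2
  have hkey : ∀ i j : Fin t, ((r i, c j) ∈ F ↔ i = j) := by
    intro i j
    constructor
    · intro hq
      set pi := ((ec.symm i : F) : Fin m × Fin n) with hpi
      set pj := ((ec.symm j : F) : Fin m × Fin n) with hpj
      have h1 : (r i, c j) = pi := by
        by_contra hne
        exact (hFind _ hq _ (ec.symm i).2 hne).1 rfl
      have h2 : (r i, c j) = pj := by
        by_contra hne
        exact (hFind _ hq _ (ec.symm j).2 hne).2 rfl
      have : (ec.symm i : F) = (ec.symm j : F) := Subtype.ext (h1.symm.trans h2)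
      exact ec.symm.injective this
    · rintro rfl
      have : (r i, c i) = ((ec.symm i : F) : Fin m × Fin n) := rfl
      rw [this]
      exact (ec.symm i).2
  let polyMat : Matrix (Fin t) (Fin t) (MvPolynomial E ℝ) :=
    Matrix.of fun i j => if h : (r i, c j) ∈ E then MvPolynomial.X (⟨(r i, c j), h⟩ : E) else 0
  let P : MvPolynomial E ℝ := polyMat.det
  have heval : ∀ w : E → ℝ,
      MvPolynomial.eval w P = ((structMat m n E w).submatrix r c).det := by
    intro w
    have := RingHom.map_det (MvPolynomial.eval w) polyMat
    rw [this]
    congr 1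
    ext i j
    by_cases h : (r i, c j) ∈ E <;>
      simp [polyMat, structMat, h]
  have hP0 : P ≠ 0 := by
    intro h
    have h1 : MvPolynomial.eval (fun e : E => if (e : Fin m × Fin n) ∈ F then (1:ℝ) else 0) P
        = 1 := by
      rw [heval]
      have : (structMat m n E fun e : E => if (e : Fin m × Fin n) ∈ F then (1:ℝ) else 0).submatrix
          r c = 1 := by
        ext i j
        by_cases hij : i = j
        · subst hij
          have hFm : (r i, c i) ∈ F := (hkey i i).mpr rfl
          simp [structMat, hFE hFm, hFm]
        · have hFm : (r i, c j) ∉ F := fun hc => hij ((hkey i j).mp hc)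
          by_cases hE : (r i, c j) ∈ E <;>
            simp [structMat, hE, hFm, Matrix.one_apply, hij]
      rw [this, Matrix.det_one]
    rw [h] at h1
    simp at h1
  have hsub : {w : E → ℝ | (structMat m n E w).rank < t} ⊆
      {w : E → ℝ | MvPolynomial.eval w P = 0} := by
    intro w hw
    by_contra hne
    have hdet : ((structMat m n E w).submatrix r c).det ≠ 0 := by
      rw [← heval]; exact hne
    have hunit : IsUnit ((structMat m n E w).submatrix r c) :=
      (Matrix.isUnit_iff_isUnit_det _).mpr (isUnit_iff_ne_zero.mpr hdet)
    have hr : ((structMat m n E w).submatrix r c).rank = t := by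
      rw [Matrix.rank_of_isUnit _ hunit, Fintype.card_fin]
    have := rank_submatrix_le' (structMat m n E w) r c
    rw [hr] at this
    exact absurd hw (not_lt.mpr this)
  exact measure_mono_null hsub (mvpoly_null P hP0)
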